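/- Let T = A + iB and S = C + iD be bounded operators on a complex Hilbert space with A, B, C, D self-adjoint and T² = S. If A ≥ 0 (or A ≤ 0), then T is normal if and only if AD = DA. -/

import Mathlib

set_option synthInstance.maxHeartbeats 1000000
set_option maxHeartbeats 1000000

open scoped ContinuousFunctionalCalculus in
lemma commute_cfc_of_commute' {A : Type*} [NormedRing A] [StarRing A] [NormedAlgebra ℝ A]
    [ContinuousFunctionalCalculus ℝ A IsSelfAdjoint]
    {a b : A} (ha : IsSelfAdjoint a) (hab : Commute b a) (f : ℝ → ℝ) :
    Commute b (cfc f a) := by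
  by_cases hf : ContinuousOn f (spectrum ℝ a)
  · rw [cfc_apply f a ha hf]
    suffices h : ∀ g : C(spectrum ℝ a, ℝ), Commute b (cfcHom ha g) from h _
    intro g
    set K : Subalgebra ℝ C(spectrum ℝ a, ℝ) :=
      (Subalgebra.centralizer ℝ {b}).comap (cfcHom ha (R := ℝ)).toAlgHom with hK
    have htop : (⊤ : Subalgebra ℝ C(spectrum ℝ a, ℝ)) ≤ K := by
      rw [← polynomialFunctions.topologicalClosure (spectrum ℝ a)]
      apply Subalgebra.topologicalClosure_minimal
      · rw [polynomialFunctions.eq_adjoin_X, Algebra.adjoin_le_iff]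
        rintro x hx
        simp only [Set.mem_singleton_iff] at hx
        subst hx
        simp only [hK, SetLike.mem_coe, Subalgebra.mem_comap, Subalgebra.mem_centralizer_iff,
          Set.mem_singleton_iff, forall_eq]
        have : ((cfcHom ha (R := ℝ)).toAlgHom (Polynomial.toContinuousMapOnAlgHom (spectrum ℝ a)
            Polynomial.X)) = a := by
          show cfcHom ha ((Polynomial.X : Polynomial ℝ).toContinuousMapOn _) = a
          rw [Polynomial.toContinuousMapOn_X_eq_restrict_id, cfcHom_id ha]
        rw [this]
        exact hab
      · have : (K : Set C(spectrum ℝ a, ℝ)) =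
            (cfcHom ha (R := ℝ)) ⁻¹' {x | b * x = x * b} := by
          ext x
          simp [hK, Subalgebra.mem_comap, Subalgebra.mem_centralizer_iff,
            Set.mem_centralizer_iff]
        rw [this]
        exact (isClosed_eq (continuous_const.mul continuous_id)
          (continuous_id.mul continuous_const)).preimage (cfcHom_continuous ha)
    have hg : g ∈ K := htop (by trivial)
    simpa [hK, Subalgebra.mem_comap, Subalgebra.mem_centralizer_iff, Commute, SemiconjBy] using hg
  · simp [cfc_apply_of_not_continuousOn a hf]

lemma cfc_sqrt_sq_eq' {A : Type*} [NormedRing A] [StarRing A] [NormedAlgebra ℝ A] [PartialOrder A]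
    [StarOrderedRing A] [ContinuousFunctionalCalculus ℝ A IsSelfAdjoint]
    [NonnegSpectrumClass ℝ A] [ContinuousMap.UniqueHom ℝ A]
    {a : A} (ha : 0 ≤ a) (hsa : IsSelfAdjoint a) : cfc Real.sqrt (a ^ 2) = a := by
  rw [← cfc_pow_id (R := ℝ) a 2 hsa, ← cfc_comp' Real.sqrt (· ^ 2) a
    (Real.continuous_sqrt.continuousOn) (by fun_prop)]
  calc cfc (fun x : ℝ ↦ Real.sqrt (x ^ 2)) a = cfc (id : ℝ → ℝ) a :=
        cfc_congr fun x hx ↦ by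
          simp [Real.sqrt_sq (spectrum_nonneg_of_nonneg ha hx)]
    _ = a := cfc_id ℝ a

open ContinuousLinearMap in
theorem normal_iff_AD_comm_of_semidefinite
    {H : Type*} [NormedAddCommGroup H] [InnerProductSpace ℂ H] [CompleteSpace H]
    (T S A B C D : H →L[ℂ] H) (hA : IsSelfAdjoint A) (hB : IsSelfAdjoint B)
    (hC : IsSelfAdjoint C) (hD : IsSelfAdjoint D)
    (hT : T = A + Complex.I • B) (hS : S = C + Complex.I • D) (hsq : T ^ 2 = S)
    (hsemi : 0 ≤ A ∨ A ≤ 0) :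
    IsStarNormal T ↔ A * D = D * A := by
  have hTstar : star T = A + (-Complex.I) • B := by
    rw [hT, star_add, star_smul, hA.star_eq, hB.star_eq]
    simp [Complex.conj_I]
  have hIne : (2 * Complex.I) ≠ 0 := by simp [Complex.I_ne_zero]
  -- normality is equivalent to A B = B A
  have hexp : star T * T - T * star T = (2 * Complex.I) • (A * B - B * A) := by
    rw [hTstar, hT]
    simp only [mul_add, add_mul, smul_mul_assoc, mul_smul_comm, smul_smul, neg_mul, mul_neg,
      Complex.I_mul_I, neg_neg, neg_smul, one_smul, neg_one_smul, smul_neg, smul_sub,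
      smul_add, two_mul, add_smul]
    abel
  have hnormal : IsStarNormal T ↔ A * B = B * A := by
    rw [isStarNormal_iff, Commute, SemiconjBy, ← sub_eq_zero, hexp, smul_eq_zero,
      or_iff_right hIne, sub_eq_zero]
  -- from T ^ 2 = S we get D = A * B + B * A
  have hsq' : (A * A - B * B) + Complex.I • (A * B + B * A) = C + Complex.I • D := by
    rw [← hS, ← hsq, hT]
    simp only [pow_two, mul_add, add_mul, smul_mul_assoc, mul_smul_comm, smul_smul,
      Complex.I_mul_I, smul_add, neg_smul, one_smul, neg_one_smul, smul_neg, neg_neg]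
    abel
  have hPsa : IsSelfAdjoint (A * A - B * B - C) := by
    simp only [IsSelfAdjoint, star_sub, star_mul, hA.star_eq, hB.star_eq, hC.star_eq]
  have hQsa : IsSelfAdjoint (A * B + B * A - D) := by
    simp only [IsSelfAdjoint, star_sub, star_add, star_mul, hA.star_eq, hB.star_eq, hD.star_eq]
    rw [add_comm (B * A) (A * B)]
  have hPQ : (A * A - B * B - C) + Complex.I • (A * B + B * A - D) = 0 := by
    have e : (A * A - B * B - C) + (Complex.I • (A * B + B * A) - Complex.I • D)
        = ((A * A - B * B) + Complex.I • (A * B + B * A)) - (C + Complex.I • D) := by abel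
    rw [smul_sub, e, hsq', sub_self]
  have hstar : (A * A - B * B - C) - Complex.I • (A * B + B * A - D) = 0 := by
    have := congrArg star hPQ
    simp only [star_add, star_smul, star_zero, Complex.star_def, Complex.conj_I, neg_smul,
      hPsa.star_eq, hQsa.star_eq] at this
    rwa [← sub_eq_add_neg] at this
  have hQ : A * B + B * A - D = 0 := by
    have h2 : (2 * Complex.I) • (A * B + B * A - D) = 0 := by
      have e : (2 * Complex.I) • (A * B + B * A - D)
          = ((A * A - B * B - C) + Complex.I • (A * B + B * A - D))
            - ((A * A - B * B - C) - Complex.I • (A * B + B * A - D)) := by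
        rw [two_mul, add_smul]; abel
      rw [e, hPQ, hstar, sub_self]
    rcases smul_eq_zero.mp h2 with h' | h'
    · exact absurd h' hIne
    · exact h'
  have hD' : D = A * B + B * A := by
    have := sub_eq_zero.mp hQ
    exact this.symm
  rw [hnormal]
  constructor
  · -- A B = B A implies A D = D A
    intro h
    have hc : Commute A B := h
    have : Commute A D := by
      rw [hD']
      exact ((Commute.refl A).mul_right hc).add_right (hc.mul_right (Commute.refl A))
    exact this
  · -- A D = D A implies A B = B A
    intro h
    have h2 : B * A ^ 2 = A ^ 2 * B := by
      have h' : A * (A * B + B * A) = (A * B + B * A) * A := by rw [← hD']; exact h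
      simp only [mul_add, add_mul, ← mul_assoc] at h'
      -- h' : A * A * B + A * B * A = A * B * A + B * A * A
      rw [add_comm (A * B * A) (B * A * A)] at h'
      have h'' := add_right_cancel h'
      rw [pow_two, ← mul_assoc, mul_assoc B A A, ← mul_assoc B A A]
      exact h''.symm
    have hBA2 : Commute B (A ^ 2) := h2
    have hA2 : IsSelfAdjoint (A ^ 2) := hA.pow 2
    rcases hsemi with hpos | hneg
    · have hcom := commute_cfc_of_commute' hA2 hBA2 Real.sqrt
      rw [cfc_sqrt_sq_eq' hpos hA] at hcom
      exact hcom.symm.eq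
    · have hpos' : 0 ≤ -A := neg_nonneg.mpr hneg
      have hBA2' : Commute B ((-A) ^ 2) := by rwa [neg_sq]
      have hcom := commute_cfc_of_commute' (hA.neg.pow 2) hBA2' Real.sqrt
      rw [cfc_sqrt_sq_eq' hpos' hA.neg] at hcom
      have : Commute B A := by simpa using hcom.neg_right
      exact this.symm.eq
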